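/- Suppose t(i,0) = c for all i ≥ 0 and Pascal's rule holds for t. Let h be the tetrahedron built from t and set m = j + k + 1. Then for all fixed j, k and all i ≥ j+k, Σ_{ℓ=0}^{m} (-1)^ℓ C(m,ℓ) h(i+ℓ, j, k) = 0; i.e., the sequence {h(i,j,k)}_{i≥j+k} satisfies an m-th order homogeneous linear recurrence with binomial coefficients. -/

import Mathlib

open fwdDiff Finset Function

def H (t : ℕ → ℕ → ℝ) : ℕ → ℕ → ℕ → ℝ
  | i, j, 0 => t i j
  | i, j, k + 1 => H t (i - 1) j k + H t i j k + H t i (j + 1) k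

private lemma diff_congr (f g : ℕ → ℝ) (a : ℕ) (hfg : ∀ x, a ≤ x → f x = g x)
    (n y : ℕ) (hy : a ≤ y) : (fwdDiff 1)^[n] f y = (fwdDiff 1)^[n] g y := by
  rw [fwdDiff_iter_eq_sum_shift, fwdDiff_iter_eq_sum_shift]
  refine Finset.sum_congr rfl fun ℓ _ => ?_
  rw [hfg]
  omega

private lemma diff_shift (f : ℕ → ℝ) (n y : ℕ) (hy : 1 ≤ y) :
    (fwdDiff 1)^[n] (fun x => f (x - 1)) y = (fwdDiff 1)^[n] f (y - 1) := by
  rw [fwdDiff_iter_eq_sum_shift, fwdDiff_iter_eq_sum_shift]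
  refine Finset.sum_congr rfl fun ℓ _ => ?_
  congr 2
  omega

private lemma triangle_diff (t : ℕ → ℕ → ℝ) (c : ℝ)
    (hconst : ∀ i : ℕ, t i 0 = c)
    (hpascal : ∀ i j : ℕ, 2 ≤ i → 1 ≤ j → j ≤ i - 1 → t i j = t (i - 1) (j - 1) + t (i - 1) j) :
    ∀ j i : ℕ, j ≤ i → (fwdDiff 1)^[j + 1] (fun x => t x j) i = 0 := by
  intro j
  induction j with
  | zero =>
    intro i _
    simp [fwdDiff, hconst]
  | succ j ih =>
    intro i hi
    rw [iterate_succ_apply]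
    have key : ∀ x, j + 1 ≤ x → fwdDiff 1 (fun x => t x (j + 1)) x = t x j := by
      intro x hx
      have := hpascal (x + 1) (j + 1) (by omega) (by omega) (by omega)
      simp only [fwdDiff, Nat.add_sub_cancel] at this ⊢
      rw [this]; ring
    rw [diff_congr _ (fun x => t x j) (j + 1) key (j + 1) i hi]
    exact ih i (by omega)

private lemma H_diff (t : ℕ → ℕ → ℝ) (c : ℝ)
    (hconst : ∀ i : ℕ, t i 0 = c)
    (hpascal : ∀ i j : ℕ, 2 ≤ i → 1 ≤ j → j ≤ i - 1 → t i j = t (i - 1) (j - 1) + t (i - 1) j) :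
    ∀ k j i : ℕ, j + k ≤ i → (fwdDiff 1)^[j + k + 1] (fun x => H t x j k) i = 0 := by
  intro k
  induction k with
  | zero =>
    intro j i hi
    have : (fun x => H t x j 0) = (fun x => t x j) := rfl
    rw [this]
    exact triangle_diff t c hconst hpascal j i (by omega)
  | succ k ih =>
    intro j i hi
    have hfun : (fun x => H t x j (k + 1))
        = ((fun x => H t (x - 1) j k) + (fun x => H t x j k)) + (fun x => H t x (j + 1) k) := by
      funext x
      simp [H, Pi.add_apply]
    rw [hfun, fwdDiff_iter_add, fwdDiff_iter_add, Pi.add_apply, Pi.add_apply]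
    have e1 : (fwdDiff 1)^[j + (k + 1) + 1] (fun x => H t (x - 1) j k) i = 0 := by
      rw [diff_shift (fun x => H t x j k) (j + (k + 1) + 1) i (by omega)]
      have : j + (k + 1) + 1 = (j + k + 1) + 1 := by omega
      rw [this, iterate_succ_apply', fwdDiff]
      have h1 : (fwdDiff 1)^[j + k + 1] (fun x => H t x j k) (i - 1 + 1) = 0 := ih j _ (by omega)
      have h2 : (fwdDiff 1)^[j + k + 1] (fun x => H t x j k) (i - 1) = 0 := ih j _ (by omega)
      rw [h1, h2, sub_zero]
    have e2 : (fwdDiff 1)^[j + (k + 1) + 1] (fun x => H t x j k) i = 0 := by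
      have : j + (k + 1) + 1 = (j + k + 1) + 1 := by omega
      rw [this, iterate_succ_apply', fwdDiff]
      rw [ih j (i + 1) (by omega), ih j i (by omega), sub_zero]
    have e3 : (fwdDiff 1)^[j + (k + 1) + 1] (fun x => H t x (j + 1) k) i = 0 := by
      have : j + (k + 1) + 1 = (j + 1) + k + 1 := by omega
      rw [this]
      exact ih (j + 1) i (by omega)
    rw [e1, e2, e3]
    ring

theorem stmt_8 (t : ℕ → ℕ → ℝ) (c : ℝ)
    (hconst : ∀ i : ℕ, t i 0 = c)
    (hpascal : ∀ i j : ℕ, 2 ≤ i → 1 ≤ j → j ≤ i - 1 → t i j = t (i - 1) (j - 1) + t (i - 1) j)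
    (j k i : ℕ) (hi : j + k ≤ i) :
    ∑ ℓ ∈ Finset.range (j + k + 2),
      (-1 : ℝ) ^ ℓ * ((j + k + 1).choose ℓ : ℝ) * H t (i + ℓ) j k = 0 := by
  set m := j + k + 1 with hm
  have h0 : (fwdDiff 1)^[m] (fun x => H t x j k) i = 0 := H_diff t c hconst hpascal k j i hi
  have hsum := fwdDiff_iter_eq_sum_shift (1 : ℕ) (fun x => H t x j k) m i
  rw [h0] at hsum
  have : ∑ ℓ ∈ Finset.range (j + k + 2),
      (-1 : ℝ) ^ ℓ * ((j + k + 1).choose ℓ : ℝ) * H t (i + ℓ) j k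
      = (-1 : ℝ) ^ m * ∑ ℓ ∈ Finset.range (m + 1),
        ((-1 : ℤ) ^ (m - ℓ) * (m.choose ℓ : ℤ)) • H t (i + ℓ • 1) j k := by
    rw [Finset.mul_sum]
    refine Finset.sum_congr (by rw [hm]) fun ℓ hℓ => ?_
    rw [Finset.mem_range] at hℓ
    have hℓm : ℓ ≤ m := by omega
    have hpow : (-1 : ℝ) ^ m * (-1 : ℝ) ^ (m - ℓ) = (-1 : ℝ) ^ ℓ := by
      rw [← pow_add]
      have : m + (m - ℓ) = ℓ + 2 * (m - ℓ) := by omega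
      rw [this, pow_add, pow_mul, neg_one_sq, one_pow, mul_one]
    have harg : i + ℓ • 1 = i + ℓ := by simp
    rw [harg, zsmul_eq_mul]
    push_cast
    rw [← mul_assoc, ← mul_assoc, hpow, hm]
  rw [this, ← hsum, mul_zero]
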